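/- Let λ, μ be real numbers with μ > 0 and 3λ + 2μ > 0, and let κ₀ = μ/(2(λ+2μ)). For n ≥ 1 define λ_{N,n} = (−3λ + 2μ(2n² + 2n − 3))/(2(λ+2μ)(4n² − 1)). Then λ_{N,n} − κ₀ = (−(3λ+5μ) + 4μn)/(2(λ+2μ)(4n² − 1)) > 0 for all natural numbers n ≥ ⌊(3λ+5μ)/(4μ)⌋ + 1, and lim_{n→∞} (λ_{N,n} − κ₀)/(μ/(2(λ+2μ)n)) = 1. -/

import Mathlib

open Filter

/-- The shifted eigenvalues `λ_{N,n} − κ₀` of the elastostatic Neumann–Poincaré operator: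
explicit formula and positivity for `n ≥ ⌊(3λ+5μ)/(4μ)⌋ + 1`, and asymptotics
`∼ μ/(2(λ+2μ)n)`. -/
theorem lambdaN_shifted_pos_and_asymp (lam mu : ℝ) (hmu : 0 < mu)
    (hconv : 0 < 3 * lam + 2 * mu)
    (kappa0 : ℝ) (hkappa0 : kappa0 = mu / (2 * (lam + 2 * mu)))
    (lamN : ℕ → ℝ)
    (hlamN : ∀ n : ℕ, lamN n =
      (-(3 * lam) + 2 * mu * (2 * (n:ℝ)^2 + 2 * (n:ℝ) - 3)) /
        (2 * (lam + 2 * mu) * (4 * (n:ℝ)^2 - 1))) :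
    (∀ n : ℕ, ⌊(3 * lam + 5 * mu) / (4 * mu)⌋ + 1 ≤ (n : ℤ) →
      lamN n - kappa0 =
        (-(3 * lam + 5 * mu) + 4 * mu * (n:ℝ)) / (2 * (lam + 2 * mu) * (4 * (n:ℝ)^2 - 1)) ∧
      0 < lamN n - kappa0) ∧
    Tendsto (fun n : ℕ => (lamN n - kappa0) / (mu / (2 * (lam + 2 * mu) * (n:ℝ))))
      atTop (nhds 1) := by
  have hD : 0 < lam + 2 * mu := by linarith
  have hc : 0 < 3 * lam + 5 * mu := by linarith
  have hDne : lam + 2 * mu ≠ 0 := ne_of_gt hD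
  have hmune : mu ≠ 0 := ne_of_gt hmu
  constructor
  · intro n hn
    have hx : (3 * lam + 5 * mu) / (4 * mu) < ((⌊(3 * lam + 5 * mu) / (4 * mu)⌋ : ℝ) + 1) :=
      Int.lt_floor_add_one _
    have hcast : ((⌊(3 * lam + 5 * mu) / (4 * mu)⌋ : ℝ) + 1) ≤ (n : ℝ) := by
      exact_mod_cast Int.cast_le.mpr hn
    have hfl : (3 * lam + 5 * mu) / (4 * mu) < (n : ℝ) := lt_of_lt_of_le hx hcast
    have hnum : 3 * lam + 5 * mu < 4 * mu * (n : ℝ) := by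
      have := (div_lt_iff₀ (by linarith : (0:ℝ) < 4 * mu)).mp hfl
      linarith
    have hfl0 : 0 ≤ ⌊(3 * lam + 5 * mu) / (4 * mu)⌋ :=
      Int.floor_nonneg.mpr (le_of_lt (div_pos hc (by linarith)))
    have hn1 : (1 : ℝ) ≤ (n : ℝ) := by
      have : (1 : ℤ) ≤ (n : ℤ) := by omega
      exact_mod_cast this
    have hden : 0 < 4 * (n:ℝ)^2 - 1 := by nlinarith
    have hdne : (4 * (n:ℝ)^2 - 1) ≠ 0 := ne_of_gt hden
    constructor
    · rw [hlamN, hkappa0]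
      rw [div_sub_div _ _ (mul_ne_zero (mul_ne_zero two_ne_zero hDne) hdne) (mul_ne_zero two_ne_zero hDne), div_eq_div_iff (mul_ne_zero (mul_ne_zero (mul_ne_zero two_ne_zero hDne) hdne) (mul_ne_zero two_ne_zero hDne)) (mul_ne_zero (mul_ne_zero two_ne_zero hDne) hdne)]; ring
    · rw [hlamN, hkappa0]
      rw [div_sub_div _ _ (by positivity) (by positivity)]
      apply div_pos
      · nlinarith
      · positivity
  · have h0 : Tendsto (fun n : ℕ => 1 / (n : ℝ)) atTop (nhds 0) :=
      tendsto_one_div_atTop_nhds_zero_nat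
    have hlim : Tendsto (fun n : ℕ =>
        (4 * mu - (3 * lam + 5 * mu) * (1 / (n:ℝ))) / (mu * (4 - (1 / (n:ℝ))^2)))
        atTop (nhds ((4 * mu - (3 * lam + 5 * mu) * 0) / (mu * (4 - 0^2)))) := by
      apply Tendsto.div
      · exact tendsto_const_nhds.sub (tendsto_const_nhds.mul h0)
      · exact tendsto_const_nhds.mul (tendsto_const_nhds.sub (h0.pow 2))
      · norm_num; positivity
    have heq : (4 * mu - (3 * lam + 5 * mu) * 0) / (mu * (4 - 0^2)) = 1 := by
      field_simp; ring
    rw [heq] at hlim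
    apply hlim.congr'
    filter_upwards [eventually_ge_atTop 1] with n hn
    have hn1 : (1 : ℝ) ≤ (n : ℝ) := by exact_mod_cast hn
    have hnne : (n : ℝ) ≠ 0 := by linarith
    have hden : 0 < 4 * (n:ℝ)^2 - 1 := by nlinarith
    have hdne : (4 * (n:ℝ)^2 - 1) ≠ 0 := ne_of_gt hden
    rw [hlamN, hkappa0]
    rw [div_sub_div _ _ (mul_ne_zero (mul_ne_zero two_ne_zero hDne) hdne) (mul_ne_zero two_ne_zero hDne)]
    field_simp
    ring_nf
    field_simp [show mu * 2 + lam ≠ 0 by linarith]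
    ring
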